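/- Let P be a finite set of points in the plane in general position, and let u, w ∈ P be distinct points such that w lies in the cone C₀ᵘ with clockwise angle α ∈ (0, π/5) from the direction (0,1) to w − u (so u ∈ C₃ʷ), and such that |T_{w,u}| ≥ |T_{u,w}|. Let v ∈ P be the point closest to w in the cone C₃ʷ, i.e. the unique minimizer of ⟨v − w, b₃⟩ over P ∩ C₃ʷ, and suppose v ≠ u. Then the canonical triangle of u and v satisfies |T_{u,v}| < |T_{u,w}|. -/

import Mathlib

noncomputable section

/-- The plane ℝ². -/
abbrev Plane : Type := EuclideanSpace ℝ (Fin 2)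

/-- The bisector direction of the `i`-th cone: the unit vector obtained by rotating `(0,1)`
clockwise by `i · 2π/5`. -/
noncomputable def coneDir (i : Fin 5) : Plane :=
  !₂[Real.sin ((i : ℕ) * (2 * Real.pi / 5)), Real.cos ((i : ℕ) * (2 * Real.pi / 5))]

/-- The cone `Cᵢᵘ`: all points `p ≠ u` such that the angle between `p - u` and the
bisector direction `coneDir i` is less than `π/5`. -/
def cone (u : Plane) (i : Fin 5) : Set Plane :=
  {p | p ≠ u ∧ InnerProductGeometry.angle (p - u) (coneDir i) < Real.pi / 5}

/-- A set of points is in general position if no difference of two distinct points makes an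
angle that is an integer multiple of `π/5` with either coordinate axis. -/
def GeneralPosition (P : Set Plane) : Prop :=
  ∀ p ∈ P, ∀ q ∈ P, p ≠ q → ∀ k : ℤ,
    (p - q) 0 * Real.cos (k * (Real.pi / 5)) - (p - q) 1 * Real.sin (k * (Real.pi / 5)) ≠ 0 ∧
    (p - q) 0 * Real.sin (k * (Real.pi / 5)) + (p - q) 1 * Real.cos (k * (Real.pi / 5)) ≠ 0

/-- `v` is the point of `P` in the cone `Cᵢᵘ` that is closest to `u`, where distance is
measured by projection onto the bisector of the cone. -/
def isClosest (P : Set Plane) (u : Plane) (i : Fin 5) (v : Plane) : Prop :=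
  v ∈ P ∧ v ∈ cone u i ∧
    ∀ p ∈ P, p ∈ cone u i → (inner ℝ (v - u) (coneDir i) : ℝ) ≤ inner ℝ (p - u) (coneDir i)

/-- The θ₅-graph of a point set `P`: each `u ∈ P` is joined to the closest point of `P`
in each of its five cones. -/
def thetaGraph (P : Set Plane) : SimpleGraph Plane where
  Adj u v := u ∈ P ∧ v ∈ P ∧ u ≠ v ∧
    ((∃ i, isClosest P u i v) ∨ (∃ i, isClosest P v i u))
  symm := by
    constructor
    rintro u v ⟨hu, hv, hne, h⟩
    exact ⟨hv, hu, hne.symm, h.symm⟩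
  loopless := by
    constructor
    rintro u ⟨-, -, hne, -⟩
    exact hne rfl

/-- The Euclidean length of a walk in the θ₅-graph. -/
noncomputable def walkLength {P : Set Plane} {u v : Plane} (p : (thetaGraph P).Walk u v) : ℝ :=
  (p.darts.map fun d => dist d.toProd.1 d.toProd.2).sum

/-- The canonical triangle `T_{u,w}` (for `w ∈ Cᵢᵘ`): the closed triangle bounded by the two
boundary rays of `Cᵢᵘ` and the line through `w` perpendicular to the bisector of the cone. -/
def canonicalTriangle (u w : Plane) (i : Fin 5) : Set Plane :=
  {p | (p = u ∨ InnerProductGeometry.angle (p - u) (coneDir i) ≤ Real.pi / 5) ∧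
       (inner ℝ (p - u) (coneDir i) : ℝ) ≤ inner ℝ (w - u) (coneDir i)}

/-- The size `|T_{u,w}|` of the canonical triangle, i.e. the length of each of the two sides
incident to the apex `u`. -/
noncomputable def triangleSize (u w : Plane) (i : Fin 5) : ℝ :=
  (inner ℝ (w - u) (coneDir i) : ℝ) / Real.cos (Real.pi / 5)

open Real

namespace Aux

lemma innerP (x y : Plane) : (inner ℝ x y : ℝ) = x 0 * y 0 + x 1 * y 1 := by
  simp [PiLp.inner_apply, RCLike.inner_apply, Fin.sum_univ_two]; ring

lemma normP (x : Plane) : ‖x‖ = Real.sqrt (x 0 ^ 2 + x 1 ^ 2) := by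
  rw [EuclideanSpace.norm_eq]; simp [Fin.sum_univ_two, sq]

lemma cd00 : coneDir 0 0 = 0 := by
  simp only [coneDir, Matrix.cons_val_zero]; norm_num
lemma cd01 : coneDir 0 1 = 1 := by
  simp only [coneDir, Matrix.cons_val_one, Matrix.head_cons]; norm_num
lemma fv1 : ((1 : Fin 5) : ℕ) = 1 := rfl
lemma fv2 : ((2 : Fin 5) : ℕ) = 2 := rfl
lemma fv3 : ((3 : Fin 5) : ℕ) = 3 := rfl
lemma fv4 : ((4 : Fin 5) : ℕ) = 4 := rfl
lemma cd10 : coneDir 1 0 = 2 * sin (π/5) * cos (π/5) := by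
  simp only [coneDir, Matrix.cons_val_zero, fv1]
  rw [show (1:ℕ) * (2 * π / 5) = 2*(π/5) by push_cast; ring, Real.sin_two_mul]
lemma cd11 : coneDir 1 1 = 2 * cos (π/5)^2 - 1 := by
  simp only [coneDir, Matrix.cons_val_one, Matrix.head_cons, Matrix.cons_val_zero, fv1]
  rw [show (1:ℕ) * (2 * π / 5) = 2*(π/5) by push_cast; ring, Real.cos_two_mul]
lemma cd20 : coneDir 2 0 = sin (π/5) := by
  simp only [coneDir, Matrix.cons_val_zero, fv2]
  rw [show (2:ℕ) * (2 * π / 5) = π - π/5 by push_cast; ring, Real.sin_pi_sub]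
lemma cd21 : coneDir 2 1 = -cos (π/5) := by
  simp only [coneDir, Matrix.cons_val_one, Matrix.head_cons, Matrix.cons_val_zero, fv2]
  rw [show (2:ℕ) * (2 * π / 5) = π - π/5 by push_cast; ring, Real.cos_pi_sub]
lemma cd30 : coneDir 3 0 = -sin (π/5) := by
  simp only [coneDir, Matrix.cons_val_zero, fv3]
  rw [show (3:ℕ) * (2 * π / 5) = π + π/5 by push_cast; ring, Real.sin_add]
  simp
lemma cd31 : coneDir 3 1 = -cos (π/5) := by
  simp only [coneDir, Matrix.cons_val_one, Matrix.head_cons, fv3]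
  rw [show (3:ℕ) * (2 * π / 5) = π + π/5 by push_cast; ring, Real.cos_add]
  simp
lemma cd40 : coneDir 4 0 = -(2 * sin (π/5) * cos (π/5)) := by
  simp only [coneDir, Matrix.cons_val_zero, fv4]
  rw [show (4:ℕ) * (2 * π / 5) = 2*π - 2*(π/5) by push_cast; ring, Real.sin_sub,
    Real.sin_two_pi, Real.cos_two_pi, Real.sin_two_mul]
  ring
lemma cd41 : coneDir 4 1 = 2 * cos (π/5)^2 - 1 := by
  simp only [coneDir, Matrix.cons_val_one, Matrix.head_cons, Matrix.cons_val_zero, fv4]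
  rw [show (4:ℕ) * (2 * π / 5) = 2*π - 2*(π/5) by push_cast; ring, Real.cos_sub,
    Real.sin_two_pi, Real.cos_two_pi, Real.cos_two_mul]
  ring

lemma inner_gt_of_angle_lt (x y : Plane) (hx : x ≠ 0) (hy : ‖y‖ = 1) {θ : ℝ}
    (hθπ : θ ≤ π) (h : InnerProductGeometry.angle x y < θ) :
    ‖x‖ * Real.cos θ < inner ℝ x y := by
  have hn : (0:ℝ) < ‖x‖ := norm_pos_iff.mpr hx
  have hq := abs_real_inner_div_norm_mul_norm_le_one x y
  rw [abs_le] at hq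
  have h1 : Real.cos θ < Real.cos (InnerProductGeometry.angle x y) :=
    Real.cos_lt_cos_of_nonneg_of_le_pi (InnerProductGeometry.angle_nonneg x y) hθπ h
  rw [InnerProductGeometry.angle, Real.cos_arccos hq.1 hq.2] at h1
  rw [hy, mul_one] at h1
  calc ‖x‖ * Real.cos θ < ‖x‖ * ((inner ℝ x y : ℝ) / ‖x‖) :=
        mul_lt_mul_of_pos_left h1 hn
    _ = inner ℝ x y := by field_simp

lemma angle_eq_of_inner (x y : Plane) (hy : ‖y‖ = 1) {n θ : ℝ} (hn : ‖x‖ = n)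
    (hi : (inner ℝ x y : ℝ) = n * Real.cos θ) (hnpos : 0 < n) (hθ : 0 ≤ θ) (hθπ : θ ≤ π) :
    InnerProductGeometry.angle x y = θ := by
  rw [InnerProductGeometry.angle, hn, hy, mul_one, hi]
  rw [mul_comm, mul_div_assoc, div_self (ne_of_gt hnpos), mul_one]
  rw [Real.arccos_cos hθ hθπ]

set_option maxHeartbeats 1000000 in
lemma scalar_main (s c sa ca r X Y n : ℝ)
    (hsc : s^2 + c^2 = 1) (hquad : 4*c^2 = 2*c + 1)
    (hs : 0 < s) (hc : 0 < c) (hc34 : 3/4 ≤ c)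
    (hsa : 0 < sa) (hsas : sa < s) (hca : c < ca) (hca1 : ca < 1) (hr : 0 < r)
    (hsize : ca ≤ c*ca + s*sa)
    (hn0 : 0 ≤ n) (hn2 : n^2 = X^2 + Y^2)
    (hpn : n*c < -(s*X) - c*Y)
    (F1 : -(s*X) - c*Y ≤ r*(c*ca + s*sa)) :
    ((X + r*sa)*0 + (Y + r*ca)*1 < r*ca) ∧
    ((X + r*sa)*(2*s*c) + (Y + r*ca)*(2*c^2-1) < r*ca) ∧
    ((X + r*sa)*s + (Y + r*ca)*(-c) < r*ca) ∧
    ((X + r*sa)*(-s) + (Y + r*ca)*(-c) < r*ca) ∧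
    ((X + r*sa)*(-(2*s*c)) + (Y + r*ca)*(2*c^2-1) < r*ca) := by
  have hcapos : (0:ℝ) < ca := lt_trans hc hca
  obtain ⟨p, hp⟩ : ∃ p : ℝ, p = -(s*X) - c*Y := ⟨_, rfl⟩
  obtain ⟨q, hq⟩ : ∃ q : ℝ, q = c*X - s*Y := ⟨_, rfl⟩
  rw [← hp] at hpn F1
  have F4 : 0 < p := lt_of_le_of_lt (mul_nonneg hn0 hc.le) hpn
  have hsq : s^2*p^2 > c^2*q^2 := by
    have h1 : p^2 > n^2*c^2 := by nlinarith [mul_nonneg hn0 hc.le]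
    have h2 : p^2 + q^2 = X^2 + Y^2 := by rw [hp, hq]; linear_combination (X^2+Y^2)*hsc
    nlinarith [sq_nonneg q, sq_nonneg c]
  have hsp : 0 < s*p := mul_pos hs F4
  have F2a : c*q < s*p := by
    by_contra h
    push_neg at h
    have h2 : 0 < s*p + c*q := by linarith
    nlinarith [mul_nonneg (sub_nonneg.mpr h) h2.le]
  have F2b : -(s*p) < c*q := by
    by_contra h
    push_neg at h
    have h2 : s*p - c*q > 0 := by linarith
    nlinarith [mul_nonneg h2.le (by linarith : (0:ℝ) ≤ -(s*p + c*q))]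
  have hX : X = -s*p + c*q := by rw [hp, hq]; linear_combination (-X)*hsc
  have hY : Y = -c*p - s*q := by rw [hp, hq]; linear_combination (-Y)*hsc
  have hts : c*sa < s*ca := by nlinarith
  refine ⟨?_, ?_, ?_, ?_, ?_⟩
  · rw [hX, hY]
    nlinarith [mul_lt_mul_of_pos_left F2b hs, mul_pos F4 hc]
  · rw [hX, hY]
    have hAeq : (-s*p + c*q)*(2*s*c) + (-c*p - s*q)*(2*c^2-1) = -(c*p) + s*q := by
      linear_combination (-2*c*p) * hsc
    have hA : -(c*p) + s*q < 0 := by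
      nlinarith [mul_lt_mul_of_pos_left F2a hs, mul_pos F4 hc, mul_pos F4 hcapos]
    have hB : sa*(2*s*c) + ca*(2*c^2-1) < ca := by
      nlinarith [mul_lt_mul_of_pos_left hts hs]
    nlinarith [hAeq, hA, mul_lt_mul_of_pos_left hB hr]
  · rw [hX, hY]
    nlinarith [mul_lt_mul_of_pos_left F2a hs, mul_lt_mul_of_pos_left hsas (mul_pos hs hr)]
  · rw [hX, hY]
    nlinarith [mul_pos hr hcapos]
  · rw [hX, hY]
    have hZeq : (-s*p + c*q)*(-(2*s*c)) + (-c*p - s*q)*(2*c^2-1)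
        = p*(c-1/2) - q*(2*s*c) := by
      linear_combination (2*c*p) * hsc - ((c+1/2)*p + s*q) * hquad
    have hZ : p*(c-1/2) - q*(2*s*c) < p := by
      nlinarith [mul_lt_mul_of_pos_left F2b hs, mul_pos F4 hs, mul_pos F4 hc]
    have h2c1 : (0:ℝ) ≤ 2*c - 1 := by linarith
    have hsize' : ca*(1-c) ≤ s*sa := by nlinarith
    have hB4 : -(sa*(2*s*c)) + ca*(2*c^2-1) ≤ ca - (c*ca + s*sa) := by
      nlinarith [mul_le_mul_of_nonneg_left hsize' h2c1]
    have hR := mul_le_mul_of_nonneg_left hB4 hr.le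
    linarith [hZeq, hZ, hR, F1]

end Aux

open Aux in
set_option maxHeartbeats 2000000 in
/-- Let `w ∈ C₀ᵘ` at clockwise angle `α ∈ (0, π/5)` from vertical with
`|T_{w,u}| ≥ |T_{u,w}|`, and let `v ≠ u` be the point of `P` closest to `w` in the cone `C₃ʷ`.
Then `|T_{u,v}| < |T_{u,w}|`. -/
theorem closest_vertex_triangle_smaller (P : Set Plane) (hfin : P.Finite)
    (hgp : GeneralPosition P) (u w v : Plane) (hu : u ∈ P) (hw : w ∈ P) (hv : v ∈ P)
    (huw : u ≠ w) (α r : ℝ) (hα : α ∈ Set.Ioo 0 (Real.pi / 5)) (hr : 0 < r)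
    (hwu : w - u = r • (!₂[Real.sin α, Real.cos α] : Plane))
    (hsize : triangleSize u w 0 ≤ triangleSize w u 3)
    (hclosest : isClosest P w 3 v) (hvu : v ≠ u) :
    ∀ j : Fin 5, v ∈ cone u j → triangleSize u v j < triangleSize u w 0 := by
  obtain ⟨hα0, hα5⟩ := hα
  have hπ : (0:ℝ) < π := Real.pi_pos
  have hcpos : 0 < cos (π/5) := Real.cos_pos_of_mem_Ioo ⟨by linarith, by linarith⟩
  have hspos : 0 < sin (π/5) := Real.sin_pos_of_pos_of_lt_pi (by linarith) (by linarith)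
  have hsc : sin (π/5)^2 + cos (π/5)^2 = 1 := Real.sin_sq_add_cos_sq _
  have h5 : Real.sqrt 5 ^ 2 = 5 := Real.sq_sqrt (by norm_num)
  have hquad : 4*cos (π/5)^2 = 2*cos (π/5) + 1 := by
    rw [Real.cos_pi_div_five]; nlinarith [h5]
  have hc34 : 3/4 ≤ cos (π/5) := by
    rw [Real.cos_pi_div_five]
    nlinarith [h5, Real.sqrt_nonneg 5]
  have hsa : 0 < sin α := Real.sin_pos_of_pos_of_lt_pi hα0 (by linarith)
  have hsas : sin α < sin (π/5) := by
    apply Real.strictMonoOn_sin ⟨by linarith, by linarith⟩ ⟨by linarith, by linarith⟩ hα5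
  have hca : cos (π/5) < cos α :=
    Real.cos_lt_cos_of_nonneg_of_le_pi hα0.le (by linarith) hα5
  have hca1 : cos α < 1 := by
    have := Real.cos_lt_cos_of_nonneg_of_le_pi le_rfl (by linarith : α ≤ π) hα0
    rwa [Real.cos_zero] at this
  -- components
  have hw0 : (w - u) 0 = r * sin α := by rw [hwu]; simp
  have hw1 : (w - u) 1 = r * cos α := by rw [hwu]; simp
  have hu0 : (u - w) 0 = -(r * sin α) := by
    rw [show u - w = -(w - u) by abel, PiLp.neg_apply, hw0]
  have hu1 : (u - w) 1 = -(r * cos α) := by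
    rw [show u - w = -(w - u) by abel, PiLp.neg_apply, hw1]
  -- norms
  have hb3 : ‖coneDir 3‖ = 1 := by
    rw [normP, cd30, cd31, show (-sin (π/5))^2 + (-cos (π/5))^2 = 1 by
      linear_combination hsc]
    exact Real.sqrt_one
  have hnuw : ‖u - w‖ = r := by
    rw [normP, hu0, hu1, show (-(r*sin α))^2 + (-(r*cos α))^2 = r^2 by
      linear_combination r^2 * Real.sin_sq_add_cos_sq α]
    exact Real.sqrt_sq hr.le
  -- v in cone w 3
  obtain ⟨hvP, hvcone, hmin⟩ := hclosest
  obtain ⟨hvw, hangle⟩ := hvcone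
  -- u in cone w 3
  have hiuw : (inner ℝ (u - w) (coneDir 3) : ℝ) = r * Real.cos (π/5 - α) := by
    rw [innerP, cd30, cd31, hu0, hu1, Real.cos_sub]; ring
  have hucone : u ∈ cone w 3 := by
    refine ⟨huw, ?_⟩
    rw [angle_eq_of_inner (u - w) (coneDir 3) hb3 hnuw hiuw hr (by linarith) (by linarith)]
    linarith
  have hminu := hmin u hu hucone
  -- abbreviations
  obtain ⟨X, hX⟩ : ∃ x : ℝ, x = (v - w) 0 := ⟨_, rfl⟩
  obtain ⟨Y, hY⟩ : ∃ y : ℝ, y = (v - w) 1 := ⟨_, rfl⟩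
  have hivw : (inner ℝ (v - w) (coneDir 3) : ℝ) = -(sin (π/5)*X) - cos (π/5)*Y := by
    rw [innerP, cd30, cd31, ← hX, ← hY]; ring
  -- F1
  have F1 : -(sin (π/5)*X) - cos (π/5)*Y ≤ r*(cos (π/5)*cos α + sin (π/5)*sin α) := by
    rw [← hivw]
    calc (inner ℝ (v - w) (coneDir 3) : ℝ) ≤ inner ℝ (u - w) (coneDir 3) := hminu
      _ = r * Real.cos (π/5 - α) := hiuw
      _ = r*(cos (π/5)*cos α + sin (π/5)*sin α) := by rw [Real.cos_sub]
  -- hpn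
  have hpn : ‖v - w‖ * cos (π/5) < -(sin (π/5)*X) - cos (π/5)*Y := by
    rw [← hivw]
    exact inner_gt_of_angle_lt (v - w) (coneDir 3) (sub_ne_zero.mpr hvw) hb3
      (by linarith) hangle
  have hn2 : ‖v - w‖^2 = X^2 + Y^2 := by
    rw [normP, ← hX, ← hY]
    exact Real.sq_sqrt (by positivity)
  -- hsize reduction
  have hsize' : cos α ≤ cos (π/5)*cos α + sin (π/5)*sin α := by
    rw [triangleSize, triangleSize, div_le_div_iff_of_pos_right hcpos] at hsize
    rw [innerP, cd00, cd01, hw0, hw1] at hsize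
    rw [hiuw, Real.cos_sub] at hsize
    have : r * cos α ≤ r * (cos (π/5)*cos α + sin (π/5)*sin α) := by
      nlinarith [hsize]
    exact le_of_mul_le_mul_left (by linarith) hr
  -- components of v - u
  have hvadd : v - u = (v - w) + (w - u) := by abel
  have hv0 : (v - u) 0 = X + r * sin α := by rw [hvadd, PiLp.add_apply, ← hX, hw0]
  have hv1 : (v - u) 1 = Y + r * cos α := by rw [hvadd, PiLp.add_apply, ← hY, hw1]
  -- main scalar inequality
  have main := scalar_main (sin (π/5)) (cos (π/5)) (sin α) (cos α) r X Y ‖v - w‖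
    hsc hquad hspos hcpos hc34 hsa hsas hca hca1 hr hsize' (norm_nonneg _) hn2 hpn F1
  -- conclusion
  have hrhs : (inner ℝ (w - u) (coneDir 0) : ℝ) = r * cos α := by
    rw [innerP, cd00, cd01, hw0, hw1]; ring
  intro j _
  fin_cases j
  · show triangleSize u v 0 < triangleSize u w 0
    rw [triangleSize, triangleSize, div_lt_div_iff_of_pos_right hcpos, hrhs,
      innerP, cd00, cd01, hv0, hv1]
    linarith [main.1]
  · show triangleSize u v 1 < triangleSize u w 0
    rw [triangleSize, triangleSize, div_lt_div_iff_of_pos_right hcpos, hrhs,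
      innerP, cd10, cd11, hv0, hv1]
    linarith [main.2.1]
  · show triangleSize u v 2 < triangleSize u w 0
    rw [triangleSize, triangleSize, div_lt_div_iff_of_pos_right hcpos, hrhs,
      innerP, cd20, cd21, hv0, hv1]
    linarith [main.2.2.1]
  · show triangleSize u v 3 < triangleSize u w 0
    rw [triangleSize, triangleSize, div_lt_div_iff_of_pos_right hcpos, hrhs,
      innerP, cd30, cd31, hv0, hv1]
    linarith [main.2.2.2.1]
  · show triangleSize u v 4 < triangleSize u w 0
    rw [triangleSize, triangleSize, div_lt_div_iff_of_pos_right hcpos, hrhs,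
      innerP, cd40, cd41, hv0, hv1]
    linarith [main.2.2.2.2]
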